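/- arXiv:1801.01354 — 4 statements merged into one kernel-verified Lean document; each statement's English description precedes it below -/
import Mathlib

section
/- Let p be a prime and A a commutative ring in which p is not a zero divisor. Let φ : A → A be a ring endomorphism which is a Frobenius lift, i.e. φ(a) - a^p ∈ pA for every a ∈ A. Then there exists a unique ring homomorphism β : A → 𝕎 A into the ring of p-typical Witt vectors of A such that for every a ∈ A and every n ∈ ℕ, the n-th ghost component of β(a) equals φⁿ(a), the n-fold iterate of φ applied to a. In particular the 0-th ghost component of β(a) is a, so β is a ring-homomorphism section of the projection 𝕎 A → A onto the 0-th component. -/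
open Finset

section Aux

variable {p : ℕ} [hp : Fact p.Prime] {A : Type*} [CommRing A]

/-- Cancellation: ghost-style sums determine the coefficients when `p` is a nonzerodivisor. -/
theorem witt_seq_eq_aux (hA : (p : A) ∈ nonZeroDivisors A) (f g : ℕ → A) (N : ℕ)
    (h : ∀ k < N, ∑ i ∈ range (k + 1), (p : A) ^ i * f i ^ p ^ (k - i)
        = ∑ i ∈ range (k + 1), (p : A) ^ i * g i ^ p ^ (k - i)) :
    ∀ k < N, f k = g k := by
  intro k
  induction k using Nat.strong_induction_on with
  | _ k ih =>
    intro hkN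
    have hk := h k hkN
    rw [Finset.sum_range_succ, Finset.sum_range_succ] at hk
    have hsum : ∑ i ∈ range k, (p : A) ^ i * f i ^ p ^ (k - i)
        = ∑ i ∈ range k, (p : A) ^ i * g i ^ p ^ (k - i) := by
      refine Finset.sum_congr rfl fun i hi => ?_
      rw [ih i (Finset.mem_range.mp hi) (lt_trans (Finset.mem_range.mp hi) hkN)]
    rw [hsum] at hk
    have hk' : (p : A) ^ k * f k ^ p ^ (k - k) = (p : A) ^ k * g k ^ p ^ (k - k) := by
      exact add_left_cancel hk
    rw [Nat.sub_self, pow_zero, pow_one, pow_one] at hk'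
    exact (mul_cancel_left_mem_nonZeroDivisors (pow_mem hA k)).mp hk'

/-- The ghost map is injective when `p` is a nonzerodivisor. -/
theorem witt_ghost_inj (hA : (p : A) ∈ nonZeroDivisors A) (x y : WittVector p A)
    (h : ∀ n, WittVector.ghostComponent n x = WittVector.ghostComponent n y) : x = y := by
  have hg : ∀ (z : WittVector p A) (n : ℕ), WittVector.ghostComponent n z
      = ∑ i ∈ range (n + 1), (p : A) ^ i * z.coeff i ^ p ^ (n - i) := fun z n => by
    rw [WittVector.ghostComponent_apply, aeval_wittPolynomial]
  ext n
  refine witt_seq_eq_aux hA x.coeff y.coeff (n + 1) (fun k _ => ?_) n (Nat.lt_succ_self n)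
  rw [← hg, ← hg, h]

/-- Existence of a Witt-coefficient sequence with prescribed ghost components `φ^[n] a`. -/
theorem witt_exists_seq (hA : (p : A) ∈ nonZeroDivisors A) (φ : A →+* A)
    (hφ : ∀ a : A, φ a - a ^ p ∈ Ideal.span {(p : A)}) (a : A) :
    ∃ c : ℕ → A, ∀ n, ∑ i ∈ range (n + 1), (p : A) ^ i * c i ^ p ^ (n - i) = (⇑φ)^[n] a := by
  set Spec : (ℕ → A) → ℕ → Prop := fun f n =>
    ∀ k < n, ∑ i ∈ range (k + 1), (p : A) ^ i * f i ^ p ^ (k - i) = (⇑φ)^[k] a with hSpec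
  -- key divisibility
  have key : ∀ (f : ℕ → A) (n : ℕ), Spec f n →
      (p : A) ^ n ∣ (⇑φ)^[n] a - ∑ i ∈ range n, (p : A) ^ i * f i ^ p ^ (n - i) := by
    intro f n hf
    cases n with
    | zero => simpa using one_dvd _
    | succ m =>
      have hm := hf m (Nat.lt_succ_self m)
      have hφm : (⇑φ)^[m + 1] a
          = ∑ i ∈ range (m + 1), (p : A) ^ i * (φ (f i)) ^ p ^ (m - i) := by
        rw [Function.iterate_succ_apply', ← hm, map_sum]
        refine Finset.sum_congr rfl fun i _ => ?_
        rw [map_mul, map_pow, map_pow, map_natCast]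
      rw [hφm, ← Finset.sum_sub_distrib]
      refine Finset.dvd_sum fun i hi => ?_
      have hi' : i ≤ m := Nat.lt_succ_iff.mp (Finset.mem_range.mp hi)
      have h1 : (p : A) ∣ φ (f i) - (f i) ^ p := by
        rw [← Ideal.mem_span_singleton]; exact hφ (f i)
      have h2 : (p : A) ^ ((m - i) + 1) ∣ (φ (f i)) ^ p ^ (m - i) - ((f i) ^ p) ^ p ^ (m - i) :=
        dvd_sub_pow_of_dvd_sub h1 (m - i)
      have h3 : ((f i) ^ p) ^ p ^ (m - i) = f i ^ p ^ (m + 1 - i) := by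
        rw [← pow_mul, ← pow_succ', Nat.succ_sub hi']
      rw [← mul_sub, ← h3]
      calc (p : A) ^ (m + 1) = (p : A) ^ i * (p : A) ^ ((m - i) + 1) := by
            rw [← pow_add]; congr 1; omega
        _ ∣ (p : A) ^ i * ((φ (f i)) ^ p ^ (m - i) - ((f i) ^ p) ^ p ^ (m - i)) :=
            mul_dvd_mul_left _ h2
  -- step
  have step : ∀ (n : ℕ) (f : ℕ → A), Spec f n → ∃ g : ℕ → A, Spec g (n + 1) := by
    intro n f hf
    obtain ⟨d, hd⟩ := key f n hf
    refine ⟨Function.update f n d, fun k hk => ?_⟩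
    rcases Nat.lt_succ_iff_lt_or_eq.mp hk with hk' | rfl
    · rw [← hf k hk']
      refine Finset.sum_congr rfl fun i hi => ?_
      have : i ≠ n := by have := Finset.mem_range.mp hi; omega
      rw [Function.update_of_ne this]
    · rw [Finset.sum_range_succ, Function.update_self, Nat.sub_self, pow_zero, pow_one]
      have hrest : ∑ i ∈ range k, (p : A) ^ i * (Function.update f k d) i ^ p ^ (k - i)
          = ∑ i ∈ range k, (p : A) ^ i * f i ^ p ^ (k - i) := by
        refine Finset.sum_congr rfl fun i hi => ?_
        have : i ≠ k := by have := Finset.mem_range.mp hi; omega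
        rw [Function.update_of_ne this]
      rw [hrest, ← hd]
      ring
  -- for each n, a sequence satisfying Spec up to n
  have exn : ∀ n : ℕ, ∃ f : ℕ → A, Spec f n := by
    intro n
    induction n with
    | zero => exact ⟨fun _ => 0, fun k hk => absurd hk (Nat.not_lt_zero k)⟩
    | succ m ih => obtain ⟨f, hf⟩ := ih; exact step m f hf
  choose F hF using exn
  -- uniqueness of such prefixes
  have uniq : ∀ (n : ℕ) (f g : ℕ → A), Spec f n → Spec g n → ∀ k < n, f k = g k := by
    intro n f g hf hg
    exact witt_seq_eq_aux hA f g n (fun k hk => by rw [hf k hk, hg k hk])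
  refine ⟨fun n => F (n + 1) n, fun n => ?_⟩
  have h := hF (n + 1) n (Nat.lt_succ_self n)
  rw [← h]
  refine Finset.sum_congr rfl fun i hi => ?_
  beta_reduce
  have hi' : i < n + 1 := Finset.mem_range.mp hi
  have hSpecmono : Spec (F (n + 1)) (i + 1) := fun k hk =>
    hF (n + 1) k (lt_of_lt_of_le hk hi')
  rw [uniq (i + 1) (F (i + 1)) (F (n + 1)) (hF (i + 1)) hSpecmono i (Nat.lt_succ_self i)]

end Aux

/-- If `A` is a commutative ring in which `p` is a nonzerodivisor and `φ : A → A` is a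
Frobenius lift (i.e. `φ a ≡ a ^ p mod p`), then there is a unique ring homomorphism
`β : A → 𝕎 A` to the `p`-typical Witt vectors whose `n`-th ghost component is `φⁿ`. -/
theorem exists_unique_section_to_wittVector (p : ℕ) [hp : Fact p.Prime] (A : Type*) [CommRing A]
    (hA : (p : A) ∈ nonZeroDivisors A)
    (φ : A →+* A) (hφ : ∀ a : A, φ a - a ^ p ∈ Ideal.span {(p : A)}) :
    ∃! β : A →+* WittVector p A,
      ∀ (a : A) (n : ℕ), WittVector.ghostComponent n (β a) = (⇑φ)^[n] a := by
  classical
  have hg : ∀ (z : WittVector p A) (n : ℕ), WittVector.ghostComponent n z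
      = ∑ i ∈ Finset.range (n + 1), (p : A) ^ i * z.coeff i ^ p ^ (n - i) := fun z n => by
    rw [WittVector.ghostComponent_apply, aeval_wittPolynomial]
  -- the underlying function
  have hex := fun a => witt_exists_seq hA φ hφ a
  choose c hc using hex
  set βf : A → WittVector p A := fun a => WittVector.mk p (c a) with hβf
  have hghost : ∀ (a : A) (n : ℕ), WittVector.ghostComponent n (βf a) = (⇑φ)^[n] a := by
    intro a n
    rw [hg, hβf]
    simpa [WittVector.coeff_mk] using hc a n
  have hinj := fun x y h => witt_ghost_inj hA x y h
  refine ⟨{ toFun := βf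
            map_one' := ?_
            map_mul' := ?_
            map_zero' := ?_
            map_add' := ?_ }, hghost, ?_⟩
  · refine hinj _ _ fun n => ?_
    rw [hghost, map_one, iterate_map_one]
  · intro x y
    refine hinj _ _ fun n => ?_
    rw [hghost, map_mul, hghost, hghost, iterate_map_mul]
  · refine hinj _ _ fun n => ?_
    rw [hghost, map_zero, iterate_map_zero]
  · intro x y
    refine hinj _ _ fun n => ?_
    rw [hghost, map_add, hghost, hghost, iterate_map_add]
  · intro β' hβ'
    refine RingHom.ext fun a => ?_
    exact hinj _ _ fun n => (hβ' a n).trans (hghost a n).symm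
end

section
/- Let p be a prime and A a commutative ring in which p is not a zero divisor, equipped with a Frobenius lift φ : A → A (a ring endomorphism with φ(a) - a^p ∈ pA for all a). Let B₀ be a commutative ring of characteristic p and let f : A → B₀ be a ring homomorphism. Then there exists a ring homomorphism g : A → 𝕎 B₀ to the p-typical Witt vectors of B₀ such that the 0-th ghost component (equivalently, the 0-th Witt coordinate) of g(a) equals f(a) for every a ∈ A, and such that g ∘ φ = F ∘ g, where F : 𝕎 B₀ → 𝕎 B₀ is the Witt vector Frobenius ring homomorphism. -/
open Finset MvPolynomial

open Finset

section Aux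

variable (p : ℕ) {A : Type*} [CommRing A] (φ : A →+* A)

/-- The defining recursion for the Witt coordinates of the canonical lift. -/
def WittLiftEq (a : A) (c : ℕ → A) (n : ℕ) : Prop :=
  (p : A) ^ n * c n = φ^[n] a - ∑ i ∈ range n, (p : A) ^ i * c i ^ p ^ (n - i)

variable {φ} {p}

theorem wittLiftEq_ghost {a : A} {c : ℕ → A} {n : ℕ} (h : WittLiftEq p φ a c n) :
    φ^[n] a = ∑ i ∈ range (n + 1), (p : A) ^ i * c i ^ p ^ (n - i) := by
  rw [Finset.sum_range_succ, Nat.sub_self, pow_zero, pow_one]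
  unfold WittLiftEq at h
  linear_combination -h

theorem wittLift_step_dvd (hφ : ∀ a : A, φ a - a ^ p ∈ Ideal.span {(p : A)})
    {a : A} {c : ℕ → A} {n : ℕ} (h : WittLiftEq p φ a c n) :
    (p : A) ^ (n + 1) ∣
      φ^[n + 1] a - ∑ i ∈ range (n + 1), (p : A) ^ i * c i ^ p ^ (n + 1 - i) := by
  have hG := wittLiftEq_ghost h
  rw [Function.iterate_succ_apply', hG, map_sum]
  rw [← Finset.sum_sub_distrib]
  refine Finset.dvd_sum fun i hi => ?_
  rw [Finset.mem_range, Nat.lt_succ_iff] at hi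
  have e1 : φ ((p : A) ^ i * c i ^ p ^ (n - i)) = (p : A) ^ i * (φ (c i)) ^ p ^ (n - i) := by
    rw [map_mul, map_pow, map_pow, map_natCast]
  have e2 : c i ^ p ^ (n + 1 - i) = (c i ^ p) ^ p ^ (n - i) := by
    rw [← pow_mul]
    congr 1
    rw [← pow_succ']
    congr 1
    omega
  rw [e1, e2, ← mul_sub]
  have hpc : (p : A) ∣ φ (c i) - c i ^ p := by
    simpa [Ideal.mem_span_singleton] using hφ (c i)
  have : (p : A) ^ (n + 1) = (p : A) ^ i * (p : A) ^ (n - i + 1) := by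
    rw [← pow_add]
    congr 1
    omega
  rw [this]
  exact mul_dvd_mul dvd_rfl (dvd_sub_pow_of_dvd_sub hpc (n - i))

theorem wittLift_uniq (hA : (p : A) ∈ nonZeroDivisors A) {a : A} {c c' : ℕ → A} {n : ℕ}
    (h : ∀ m ≤ n, WittLiftEq p φ a c m) (h' : ∀ m ≤ n, WittLiftEq p φ a c' m) :
    ∀ m ≤ n, c m = c' m := by
  intro m hm
  induction m using Nat.strong_induction_on with
  | _ m ih =>
    have e1 := h m hm
    have e2 := h' m hm
    unfold WittLiftEq at e1 e2
    have hsum : ∑ i ∈ range m, (p : A) ^ i * c i ^ p ^ (m - i)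
        = ∑ i ∈ range m, (p : A) ^ i * c' i ^ p ^ (m - i) := by
      refine Finset.sum_congr rfl fun i hi => ?_
      rw [Finset.mem_range] at hi
      rw [ih i hi (hi.le.trans hm)]
    have : (p : A) ^ m * c m = (p : A) ^ m * c' m := by rw [e1, e2, hsum]
    exact (mul_cancel_left_mem_nonZeroDivisors (pow_mem hA m)).mp this

theorem wittLift_exists_upTo (hA : (p : A) ∈ nonZeroDivisors A)
    (hφ : ∀ a : A, φ a - a ^ p ∈ Ideal.span {(p : A)}) (a : A) (n : ℕ) :
    ∃ c : ℕ → A, ∀ m ≤ n, WittLiftEq p φ a c m := by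
  induction n with
  | zero =>
    refine ⟨fun _ => a, fun m hm => ?_⟩
    interval_cases m
    simp [WittLiftEq]
  | succ n ihn =>
    obtain ⟨c, hc⟩ := ihn
    obtain ⟨q, hq⟩ := wittLift_step_dvd hφ (hc n le_rfl)
    refine ⟨fun m => if m = n + 1 then q else c m, fun m hm => ?_⟩
    rcases Nat.lt_succ_iff_lt_or_eq.mp (Nat.lt_succ_of_le hm) with hm' | rfl
    · have hm'' : m ≤ n := Nat.lt_succ_iff.mp hm'
      have := hc m hm''
      simp only [WittLiftEq] at this ⊢
      rw [if_neg (by omega)]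
      rw [this]
      congr 1
      refine Finset.sum_congr rfl fun i hi => ?_
      rw [Finset.mem_range] at hi
      rw [if_neg (by omega)]
    · simp only [WittLiftEq]
      rw [if_pos trivial, ← hq]
      congr 1
      refine Finset.sum_congr rfl fun i hi => ?_
      rw [Finset.mem_range] at hi
      rw [if_neg (by omega)]

theorem wittLift_exists (hA : (p : A) ∈ nonZeroDivisors A)
    (hφ : ∀ a : A, φ a - a ^ p ∈ Ideal.span {(p : A)}) (a : A) :
    ∃ c : ℕ → A, ∀ n, WittLiftEq p φ a c n := by
  choose c hc using wittLift_exists_upTo hA hφ a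
  refine ⟨fun n => c n n, fun n => ?_⟩
  have key : ∀ m ≤ n, c m m = c n m := fun m hm =>
    wittLift_uniq hA (hc m) (fun k hk => hc n k (hk.trans hm)) m le_rfl
  have := hc n n le_rfl
  unfold WittLiftEq at this ⊢
  beta_reduce
  rw [key n le_rfl, this]
  congr 1
  refine Finset.sum_congr rfl fun i hi => ?_
  rw [Finset.mem_range] at hi
  rw [key i hi.le]

end Aux

section Main

variable {p : ℕ} [hp : Fact p.Prime] {A : Type*} [CommRing A]

theorem ghost_injective_of_nonZeroDivisor (hA : (p : A) ∈ nonZeroDivisors A)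
    {x y : WittVector p A}
    (h : ∀ n, WittVector.ghostComponent n x = WittVector.ghostComponent n y) : x = y := by
  ext n
  induction n using Nat.strong_induction_on with
  | _ n ih =>
    have h1 := h n
    rw [WittVector.ghostComponent_apply, WittVector.ghostComponent_apply,
      aeval_wittPolynomial, aeval_wittPolynomial, Finset.sum_range_succ,
      Finset.sum_range_succ, Nat.sub_self, pow_zero, pow_one, pow_one] at h1
    have hsum : ∑ i ∈ range n, (p : A) ^ i * x.coeff i ^ p ^ (n - i)
        = ∑ i ∈ range n, (p : A) ^ i * y.coeff i ^ p ^ (n - i) := by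
      refine Finset.sum_congr rfl fun i hi => ?_
      rw [Finset.mem_range] at hi
      rw [ih i hi]
    rw [hsum] at h1
    have h2 : (p : A) ^ n * x.coeff n = (p : A) ^ n * y.coeff n := add_left_cancel h1
    exact (mul_cancel_left_mem_nonZeroDivisors (pow_mem hA n)).mp h2

end Main

/-- Let `A` be a commutative ring in which `p` is a nonzerodivisor, equipped with a Frobenius
lift `φ`, let `B₀` be a ring of characteristic `p` and `f : A → B₀` a ring homomorphism. Then
there is a ring homomorphism `g : A → 𝕎 B₀` lifting `f` (its `0`-th ghost component is `f`)
and intertwining `φ` with the Witt vector Frobenius. -/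
theorem exists_hom_to_wittVector_lifting (p : ℕ) [hp : Fact p.Prime] (A : Type*) [CommRing A]
    (hA : (p : A) ∈ nonZeroDivisors A)
    (φ : A →+* A) (hφ : ∀ a : A, φ a - a ^ p ∈ Ideal.span {(p : A)})
    (B₀ : Type*) [CommRing B₀] [CharP B₀ p] (f : A →+* B₀) :
    ∃ g : A →+* WittVector p B₀,
      (∀ a : A, WittVector.ghostComponent 0 (g a) = f a) ∧
        (∀ a : A, g (φ a) = WittVector.frobenius (g a)) := by
  classical
  choose c hc using wittLift_exists hA hφ
  set sFun : A → WittVector p A := fun a => WittVector.mk p (c a) with hsFun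
  have hcoeff : ∀ a n, (sFun a).coeff n = c a n := fun a n => rfl
  have hghost : ∀ (a : A) (n : ℕ), WittVector.ghostComponent n (sFun a) = φ^[n] a := by
    intro a n
    rw [WittVector.ghostComponent_apply, aeval_wittPolynomial, wittLiftEq_ghost (hc a n)]
    simp only [hcoeff]
  have hc0 : ∀ a : A, c a 0 = a := by
    intro a
    have := hc a 0
    simpa [WittLiftEq] using this
  let s : A →+* WittVector p A :=
    { toFun := sFun
      map_one' := ghost_injective_of_nonZeroDivisor hA fun n => by
        rw [hghost, map_one, iterate_map_one]
      map_mul' := fun a b => ghost_injective_of_nonZeroDivisor hA fun n => by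
        rw [hghost, map_mul, hghost, hghost, iterate_map_mul]
      map_zero' := ghost_injective_of_nonZeroDivisor hA fun n => by
        rw [hghost, map_zero, iterate_map_zero]
      map_add' := fun a b => ghost_injective_of_nonZeroDivisor hA fun n => by
        rw [hghost, map_add, hghost, hghost, iterate_map_add] }
  have hmapfrob : ∀ x : WittVector p A,
      WittVector.map f (WittVector.frobenius x) = WittVector.frobenius (WittVector.map f x) := by
    intro x
    ext n
    simp only [WittVector.map_coeff, WittVector.coeff_frobenius, map_aeval]
    apply MvPolynomial.eval₂Hom_congr (RingHom.ext_int _ _) ?_ rfl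
    ext i
    simp [WittVector.map_coeff]
  refine ⟨(WittVector.map f).comp s, fun a => ?_, fun a => ?_⟩
  · have h0 : ∀ x : WittVector p B₀, WittVector.ghostComponent 0 x = x.coeff 0 := by
      intro x
      rw [WittVector.ghostComponent_apply, aeval_wittPolynomial]
      simp
    rw [RingHom.comp_apply, h0, WittVector.map_coeff]
    show f ((sFun a).coeff 0) = f a
    rw [hcoeff, hc0]
  · have h1 : sFun (φ a) = WittVector.frobenius (sFun a) :=
      ghost_injective_of_nonZeroDivisor hA fun n => by
        rw [WittVector.ghostComponent_frobenius, hghost, hghost, Function.iterate_succ_apply]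
    show WittVector.map f (sFun (φ a)) = WittVector.frobenius (WittVector.map f (sFun a))
    rw [h1, hmapfrob]
end

section
/- Let S be a commutative ring, φ : S → S a ring endomorphism, I an ideal of S, φ₁ : I → S an additive map, and ϖ ∈ S an element such that φ(s) = ϖ · φ₁(s) for every s ∈ I. Assume the image of φ₁ generates the unit ideal: there exist a natural number n and families a : Fin n → S and b : Fin n → I with ∑ᵢ aᵢ · φ₁(bᵢ) = 1. Let M be an S-module, Fil M a submodule of M such that s·m ∈ Fil M for every s ∈ I and m ∈ M, let φ_M : M → M be an additive map, and let φ_{M,1} : Fil M → M be an additive map which is φ-semilinear (φ_{M,1}(s·m) = φ(s)·φ_{M,1}(m) for every s ∈ S and m ∈ Fil M) and which satisfies φ_{M,1}(s·m) = φ₁(s)·φ_M(m) for every s ∈ I and m ∈ M. Then φ_M(m) = ϖ · φ_{M,1}(m) for every m ∈ Fil M. -/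
/-- For a frame `(S, I, φ, φ₁, ϖ)` satisfying the surjectivity condition (the image of `φ₁`
generates the unit ideal), window axiom (2) — `φ_{M,1}(s • m) = φ₁(s) • φ_M(m)` for `s ∈ I`,
`m ∈ M` — together with `φ`-semilinearity of `φ_{M,1}` implies window axiom (3):
`φ_M(m) = ϖ • φ_{M,1}(m)` for all `m ∈ Fil M`. -/
theorem window_axiom_two_implies_three (S : Type*) [CommRing S] (φ : S →+* S) (I : Ideal S)
    (φ₁ : I →+ S) (ϖ : S) (hframe : ∀ s : I, φ (s : S) = ϖ * φ₁ s)
    (hsurj : ∃ (n : ℕ) (a : Fin n → S) (b : Fin n → I), ∑ i, a i * φ₁ (b i) = 1)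
    (M : Type*) [AddCommGroup M] [Module S M]
    (Fil : Submodule S M) (hFil : ∀ s ∈ I, ∀ m : M, s • m ∈ Fil)
    (φM : M →+ M) (φM1 : Fil →+ M)
    (hsemi : ∀ (s : S) (m : Fil), φM1 (s • m) = φ s • φM1 m)
    (hax2 : ∀ (s : I) (m : M), φM1 ⟨(s : S) • m, hFil (s : S) s.2 m⟩ = φ₁ s • φM m) :
    ∀ m : Fil, φM (m : M) = ϖ • φM1 m := by
  obtain ⟨n, a, b, hab⟩ := hsurj
  intro m
  have key : ∀ i, φ₁ (b i) • φM (m : M) = (ϖ * φ₁ (b i)) • φM1 m := by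
    intro i
    rw [← hax2 (b i) (m : M)]
    have : (⟨(b i : S) • (m : M), hFil (b i : S) (b i).2 (m : M)⟩ : Fil)
        = (b i : S) • m := rfl
    rw [this, hsemi, hframe]
  calc φM (m : M) = (∑ i, a i * φ₁ (b i)) • φM (m : M) := by rw [hab, one_smul]
    _ = ∑ i, a i • (φ₁ (b i) • φM (m : M)) := by
        rw [Finset.sum_smul]; simp [mul_smul]
    _ = ∑ i, a i • ((ϖ * φ₁ (b i)) • φM1 m) := by simp_rw [key]
    _ = (ϖ * ∑ i, a i * φ₁ (b i)) • φM1 m := by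
        rw [Finset.mul_sum, Finset.sum_smul]
        congr 1; ext i; rw [smul_smul, mul_left_comm]
    _ = ϖ • φM1 m := by rw [hab, mul_one]
end

section
/- Let p be a prime, R a commutative ring, 𝔖 = R⟦u⟧ the formal power series ring, and c = u^p + p ∈ 𝔖. Fix natural numbers r, s and matrices A (r×r), B (r×s), C (s×r), D (s×s) over 𝔖, and let Y be the (r+s)×(r+s) block matrix (I_r + p·A, p·B; p·C, I_s + p·D) over 𝔖. Let 𝔖_c denote the localization of 𝔖 away from c, and define the block matrix Z over 𝔖_c with blocks Z₁₁ = I_r + p·A, Z₁₂ = p²·B·c⁻¹, Z₂₁ = c·C, Z₂₂ = I_s + p·D (images of entries taken in 𝔖_c). Then: (1) with X' the block matrix (c·I_r, 0; 0, p·I_s), the identity X'·Z = Y·X' holds over 𝔖_c; and (2) writing 𝔖₀ = (R/pR)⟦u⟧ for the reduction mod p of 𝔖, the ring homomorphism 𝔖 → 𝔖₀ (reducing coefficients mod p) sends c to u^p and hence induces a ring homomorphism ρ : 𝔖_c → (𝔖₀ localized away from u^p), and the matrix ρ(Z) equals the image of the block matrix (I_r, 0; u^p·C̄, I_s) over 𝔖₀,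 where C̄ is the reduction of C mod p; in particular ρ(Z) comes from a matrix over 𝔖₀ whose constant term (reduction modulo u) is the identity matrix. -/
open PowerSeries Matrix

/-- The matrix computation in the comparison of adapted deformations for two Frobenius lifts.
Let `𝔖 = R⟦u⟧`, `c = u^p + p`, `Y` the block matrix `(1 + pA, pB; pC, 1 + pD)` over `𝔖`, and
`Z` the block matrix `(1 + pA, p²Bc⁻¹; cC, 1 + pD)` over the localization `𝔖_c` of `𝔖` away
from `c`. Then (1) with `X' = (c·1, 0; 0, p·1)` one has `X'·Z = Y·X'` over `𝔖_c`; and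
(2) the reduction `𝔖 → 𝔖₀ = (R/p)⟦u⟧` sends `c` to `u^p`, hence induces
`ρ : 𝔖_c → (𝔖₀)_{u^p}`, and `ρ(Z)` is the image of the block matrix `(1, 0; u^p·C̄, 1)` over
`𝔖₀`, whose reduction modulo `u` (constant term) is the identity matrix. -/
theorem adapted_deformation_matrix_computation (p : ℕ) [Fact p.Prime] (R : Type*) [CommRing R]
    (r s : ℕ)
    (A : Matrix (Fin r) (Fin r) (PowerSeries R))
    (B : Matrix (Fin r) (Fin s) (PowerSeries R))
    (C : Matrix (Fin s) (Fin r) (PowerSeries R))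
    (D : Matrix (Fin s) (Fin s) (PowerSeries R)) :
    let R₀ := R ⧸ Ideal.span {(p : R)}
    let c : PowerSeries R := X ^ p + (p : PowerSeries R)
    let Y := fromBlocks (1 + (p : PowerSeries R) • A) ((p : PowerSeries R) • B)
      ((p : PowerSeries R) • C) (1 + (p : PowerSeries R) • D)
    let ι := algebraMap (PowerSeries R) (Localization.Away c)
    let cinv := IsLocalization.Away.invSelf (S := Localization.Away c) c
    let Z := fromBlocks ((1 + (p : PowerSeries R) • A).map ι)
      (cinv • (((p : PowerSeries R) ^ 2 • B).map ι))
      ((c • C).map ι) ((1 + (p : PowerSeries R) • D).map ι)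
    let X' := fromBlocks (ι c • (1 : Matrix (Fin r) (Fin r) (Localization.Away c))) 0 0
      ((p : Localization.Away c) • (1 : Matrix (Fin s) (Fin s) (Localization.Away c)))
    let q : PowerSeries R →+* PowerSeries R₀ :=
      PowerSeries.map (Ideal.Quotient.mk (Ideal.span {(p : R)}))
    X' * Z = Y.map ι * X' ∧
    q c = (X : PowerSeries R₀) ^ p ∧
    ∃ ρ : Localization.Away c →+* Localization.Away ((X : PowerSeries R₀) ^ p),
      (∀ x : PowerSeries R, ρ (ι x) =
          algebraMap (PowerSeries R₀) (Localization.Away ((X : PowerSeries R₀) ^ p)) (q x)) ∧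
      Z.map ρ = (fromBlocks 1 0 (((X : PowerSeries R₀) ^ p) • C.map q) 1).map
        (algebraMap (PowerSeries R₀) (Localization.Away ((X : PowerSeries R₀) ^ p))) ∧
      (fromBlocks (1 : Matrix (Fin r) (Fin r) (PowerSeries R₀)) 0
          (((X : PowerSeries R₀) ^ p) • C.map q)
          (1 : Matrix (Fin s) (Fin s) (PowerSeries R₀))).map (constantCoeff : PowerSeries R₀ →+* R₀) = 1 := by
  intro R₀ c Y ι cinv Z X' q
  have hmul : ι c * cinv = 1 := IsLocalization.Away.mul_invSelf c
  have hp0 : (p : R₀) = 0 :=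
    Ideal.Quotient.eq_zero_iff_mem.mpr (Ideal.mem_span_singleton_self _)
  have hps0 : (p : PowerSeries R₀) = 0 := by
    rw [← map_natCast (PowerSeries.C (R := R₀)) p, hp0, map_zero]
  have hqp : q (p : PowerSeries R) = 0 := by rw [map_natCast, hps0]
  have hpne : p ≠ 0 := (Fact.out : p.Prime).ne_zero
  have hqc : q c = (X : PowerSeries R₀) ^ p := by
    simp only [q, c, map_add, map_pow, PowerSeries.map_X, hqp, add_zero]
  refine ⟨?_, hqc, ?_⟩
  · simp only [Z, X', Y, fromBlocks_multiply, Matrix.map_mul, fromBlocks_map,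
      Matrix.smul_mul, Matrix.mul_smul, Matrix.one_mul, Matrix.mul_one,
      Matrix.zero_mul, Matrix.mul_zero, add_zero, zero_add, Matrix.map_zero,
      smul_smul]
    rw [mul_comm cinv, hmul, one_smul]
    ext i j
    cases i <;> cases j <;>
      simp [Matrix.map_apply, Matrix.smul_apply, pow_two, _root_.map_mul] <;> ring
  · set alg := algebraMap (PowerSeries R₀)
      (Localization.Away ((X : PowerSeries R₀) ^ p)) with halg
    have hg : IsUnit ((alg.comp q) c) := by
      rw [RingHom.comp_apply, hqc]
      exact IsLocalization.Away.algebraMap_isUnit _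
    set ρ := IsLocalization.Away.lift (S := Localization.Away c) c hg with hρ
    have hpl : (p : Localization.Away ((X : PowerSeries R₀) ^ p)) = 0 := by
      rw [← map_natCast alg p, hps0, map_zero]
    have hρι : ∀ x : PowerSeries R, ρ (ι x) = alg (q x) :=
      fun x => IsLocalization.Away.lift_eq (S := Localization.Away c) c hg x
    refine ⟨ρ, hρι, ?_, ?_⟩
    · ext i j
      cases i <;> cases j <;>
        simp [Z, Matrix.map_apply, Matrix.smul_apply, Matrix.add_apply,
          Matrix.one_apply, smul_eq_mul, _root_.map_mul, _root_.map_add,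
          hρι, hqp, hqc, apply_ite, pow_two, hpl] <;>
        split_ifs <;> tauto
    · ext i j
      cases i <;> cases j <;>
        simp only [Matrix.map_apply, fromBlocks_apply₁₁, fromBlocks_apply₁₂,
          fromBlocks_apply₂₁, fromBlocks_apply₂₂, Matrix.one_apply,
          Matrix.zero_apply, Matrix.smul_apply, smul_eq_mul, _root_.map_mul,
          map_pow, constantCoeff_X, zero_pow hpne, zero_mul, map_zero,
          _root_.map_one, apply_ite (constantCoeff : PowerSeries R₀ →+* R₀), Sum.inl.injEq,
          Sum.inr.injEq, reduceCtorEq] <;>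
        split_ifs <;> tauto
end
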